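/- A positive T-diagram can be represented by a virtual closed braid only if each of its arrows has a well-defined level; in combinatorial terms: in a virtual braid diagram on k strands with real crossings at distinct heights, the induced T-diagram of its closure (with the k positive markings coming from the closure arcs and arrows from the real crossings) has the property that the arrow of the lowest real crossing has level 1, and inductively every arrow has a level. -/
import Mathlib


/-- A Gauss diagram with `n` arrows: the `2n` arrow endpoints are the points of the cyclic group
`ZMod (2*n)` (listed in the cyclic order of the oriented circle), and arrow `a` points from its
underpass point `tail a` to its overpass point `head a`.  The edge `e` of the diagram is the arc
of the circle from the point `e` to the point `e + 1`. -/
structure GaussDiagram (n : ℕ) where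
  head : Fin n → ZMod (2 * n)
  tail : Fin n → ZMod (2 * n)
  inj : Function.Injective (Sum.elim head tail)

namespace GaussDiagram

variable {n : ℕ}

/-- The edge-characteristic vector of the distinguished loop of arrow `a`: it traverses the
edges from `head a` to `tail a` along the orientation of the circle (and returns along the
arrow). -/
def arcChain (G : GaussDiagram n) (a : Fin n) : ZMod (2 * n) → ℤ :=
  fun e => if (e - G.head a).val < (G.tail a - G.head a).val then 1 else 0

/-- The `(n+1) × 2n` matrix whose rows are the edge-characteristic vectors of the `n`
distinguished loops together with the full circle (the all-ones row, indexed by `none`). -/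
def loopMatrix (G : GaussDiagram n) : Matrix (Option (Fin n)) (ZMod (2 * n)) ℤ :=
  fun r e => r.elim 1 fun a => G.arcChain a e

/-- The elementary refinement move of type II+ at arrow `a`: add `+1` on the edge directly
following each endpoint of `a` and `-1` on the edge directly preceding it (with multiplicity). -/
def moveVec (G : GaussDiagram n) (a : Fin n) : ZMod (2 * n) → ℤ :=
  fun e => (if e = G.head a then 1 else 0) + (if e = G.tail a then 1 else 0)
    - (if e = G.head a - 1 then 1 else 0) - (if e = G.tail a - 1 then 1 else 0)

/-- The edge `e` (from point `e` to point `e+1`) is adjacent to the arrow `a` if one of its two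
boundary points is an endpoint of `a`. -/
def adjacent (G : GaussDiagram n) (e : ZMod (2 * n)) (a : Fin n) : Prop :=
  e = G.head a ∨ e + 1 = G.head a ∨ e = G.tail a ∨ e + 1 = G.tail a

end GaussDiagram

/-- A move of a loop in a Gauss diagram: either follow the next edge of the circle in the
direction of its orientation (`circ`), or jump along an arrow, in either direction. -/
inductive Move (n : ℕ) where
  | circ : Move n
  | jumpHT : Fin n → Move n
  | jumpTH : Fin n → Move n

/-- Whether a move is a jump along an arrow. -/
def Move.isJump {n : ℕ} : Move n → Prop
  | .circ => False
  | _ => True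

namespace GaussDiagram

/-- The point reached by performing one move starting at the point `p`. -/
def target (G : GaussDiagram n) (p : ZMod (2 * n)) : Move n → ZMod (2 * n)
  | .circ => p + 1
  | .jumpHT a => G.tail a
  | .jumpTH a => G.head a

/-- Validity of a sequence of moves starting at `p`: a jump along an arrow may only be performed
from an endpoint of that arrow. -/
def validFrom (G : GaussDiagram n) : ZMod (2 * n) → List (Move n) → Prop
  | _, [] => True
  | p, mv :: r =>
      (match mv with
        | .circ => True
        | .jumpHT a => p = G.head a
        | .jumpTH a => p = G.tail a) ∧ validFrom G (G.target p mv) r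

/-- The point reached after performing a sequence of moves from `p`. -/
def run (G : GaussDiagram n) : ZMod (2 * n) → List (Move n) → ZMod (2 * n)
  | p, [] => p
  | p, mv :: r => run G (G.target p mv) r

/-- A loop in the Gauss diagram which respects the orientation of the circle: a closed valid
sequence of moves (circle arcs are always traversed in the orientation direction, arrows may be
traversed both ways). -/
structure Loop (G : GaussDiagram n) where
  start : ZMod (2 * n)
  moves : List (Move n)
  valid : G.validFrom start moves
  closed : G.run start moves = start

/-- A loop is *reduced* (nontrivial) if it is nonempty and never backtracks: no two cyclically
consecutive moves are jumps (two consecutive jumps necessarily cancel along the same arrow). -/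
def Loop.Reduced {G : GaussDiagram n} (L : Loop G) : Prop :=
  L.moves ≠ [] ∧
  L.moves.Chain' (fun m₁ m₂ => ¬(m₁.isJump ∧ m₂.isJump)) ∧
  ∀ m₁ ∈ L.moves.getLast?, ∀ m₂ ∈ L.moves.head?, ¬(m₁.isJump ∧ m₂.isJump)

/-- Whether a sequence of moves from `p` meets a marking of the marking function `m` (which
records the number of (positive) markings on each edge). -/
def meetsFrom (G : GaussDiagram n) (m : ZMod (2 * n) → ℕ) :
    ZMod (2 * n) → List (Move n) → Prop
  | _, [] => False
  | p, .circ :: r => 0 < m p ∨ meetsFrom G m (p + 1) r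
  | _, .jumpHT a :: r => meetsFrom G m (G.tail a) r
  | _, .jumpTH a :: r => meetsFrom G m (G.head a) r

/-- A loop meets a marking if one of the circle arcs it traverses carries a marking. -/
def Loop.Meets {G : GaussDiagram n} (m : ZMod (2 * n) → ℕ) (L : Loop G) : Prop :=
  G.meetsFrom m L.start L.moves

/-- In the diagram obtained by deleting the arrows of `R`, the point `p` is directly preceded by
a marking: going backwards along the circle from `p` one finds a marking before meeting any
endpoint of a non-deleted arrow. -/
def precededBy (G : GaussDiagram n) (m : ZMod (2 * n) → ℕ) (R : Set (Fin n))
    (p : ZMod (2 * n)) : Prop :=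
  ∃ j : ℕ, 0 < m (p - 1 - (j : ZMod (2 * n))) ∧
    ∀ i < j, ∃ a ∈ R, G.head a = p - 1 - (i : ZMod (2 * n)) ∨
      G.tail a = p - 1 - (i : ZMod (2 * n))

/-- The set of arrows removed after `k` rounds of deleting the arrows of level `1` (those whose
two endpoints are both directly preceded by a marking in the current diagram). -/
def removedAt (G : GaussDiagram n) (m : ZMod (2 * n) → ℕ) : ℕ → Set (Fin n)
  | 0 => ∅
  | k + 1 => removedAt G m k ∪
      {a | G.precededBy m (removedAt G m k) (G.head a) ∧
           G.precededBy m (removedAt G m k) (G.tail a)}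

/-- An arrow has a well-defined level if it is eventually deleted in the level process. -/
def HasLevel (G : GaussDiagram n) (m : ZMod (2 * n) → ℕ) (a : Fin n) : Prop :=
  ∃ k, a ∈ G.removedAt m k

/-- The number of times a sequence of moves from `p` traverses each edge of the circle. -/
def edgeCount (G : GaussDiagram n) : ZMod (2 * n) → List (Move n) → ZMod (2 * n) → ℤ
  | _, [] => 0
  | p, .circ :: r => fun e => (if e = p then 1 else 0) + edgeCount G (p + 1) r e
  | _, .jumpHT a :: r => edgeCount G (G.tail a) r
  | _, .jumpTH a :: r => edgeCount G (G.head a) r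

/-- The net number of traversals of each arrow, counted positively in the tail-to-head
direction (the direction used by the distinguished loops). -/
def netJump {n : ℕ} : List (Move n) → Fin n → ℤ
  | [] => 0
  | .circ :: r => netJump r
  | .jumpHT a :: r => fun b => netJump r b - (if b = a then 1 else 0)
  | .jumpTH a :: r => fun b => (if b = a then 1 else 0) + netJump r b

/-- `y` is a refinement of the decorated Gauss diagram with arrow valuations `dA` and circle
valuation `d`: the sum of the markings along each distinguished loop is the corresponding
valuation, and the total sum is the valuation of the circle. -/
def IsRefinement [NeZero (2 * n)] (G : GaussDiagram n) (dA : Fin n → ℤ) (d : ℤ)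
    (y : ZMod (2 * n) → ℤ) : Prop :=
  (∀ a, ∑ e, G.arcChain a e * y e = dA a) ∧ ∑ e, y e = d

/-- The homology class in `H₁(ℝ × S¹) = ℤ` of a loop of the decorated Gauss diagram with arrow
valuations `dA` and circle valuation `d`, computed by expressing the cycle of the loop in the
basis formed by the distinguished loops and the circle. -/
def loopClass [NeZero (2 * n)] (G : GaussDiagram n) (dA : Fin n → ℤ) (d : ℤ)
    (L : Loop G) : ℤ :=
  ∑ a, netJump L.moves a * dA a +
    (G.edgeCount L.start L.moves 0 - ∑ a, netJump L.moves a * G.arcChain a 0) * d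

end GaussDiagram

/-- The T-diagram of the closure of a virtual braid on `k` strands has all its arrows leveled.
The braid structure is encoded by a strand function and a height function on the circle points:
the two endpoints of each arrow (real crossing) have the same height and lie on different
strands, distinct crossings occur at distinct heights, the cyclic order of the points is the
lexicographic order (position of the strand along the closure, height), and the lowest point of
each strand is directly preceded by a (positive) marking coming from the closure arcs.  Then the
arrow of the lowest real crossing has level `1`, and every arrow has a well-defined level. -/
theorem stmt17 (n k : ℕ) (G : GaussDiagram n) (m : ZMod (2 * n) → ℕ)
    (strand : ZMod (2 * n) → Fin k) (hgt : ZMod (2 * n) → ℕ) (sOrd : Fin k → ℕ)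
    (hso : Function.Injective sOrd)
    (h1 : ∀ a, hgt (G.head a) = hgt (G.tail a))
    (h2 : ∀ a, strand (G.head a) ≠ strand (G.tail a))
    (h3 : ∀ a b, a ≠ b → hgt (G.head a) ≠ hgt (G.head b))
    (h4 : ∀ p q : ZMod (2 * n), (p.val < q.val ↔
      (sOrd (strand p) < sOrd (strand q) ∨ (strand p = strand q ∧ hgt p < hgt q))))
    (h5 : ∀ p : ZMod (2 * n), (∀ q, strand q = strand p → hgt p ≤ hgt q) → 0 < m (p - 1)) :
    (∀ a, (∀ b, hgt (G.head a) ≤ hgt (G.head b)) → a ∈ G.removedAt m 1) ∧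
    ∀ a, G.HasLevel m a := by

  rcases Nat.eq_zero_or_pos n with hn | hn
  · subst hn; exact ⟨fun a => a.elim0, fun a => a.elim0⟩
  haveI : NeZero (2 * n) := ⟨by omega⟩
  haveI : Fact (1 < 2 * n) := ⟨by omega⟩
  classical
  -- every point is an endpoint of some arrow
  have surj : ∀ p : ZMod (2 * n), ∃ b, G.head b = p ∨ G.tail b = p := by
    have hbij : Function.Bijective (Sum.elim G.head G.tail) := by
      rw [Fintype.bijective_iff_injective_and_card]
      refine ⟨G.inj, ?_⟩
      simp [ZMod.card]
      omega
    intro p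
    obtain ⟨x, hx⟩ := hbij.2 p
    cases x with
    | inl a => exact ⟨a, Or.inl hx⟩
    | inr a => exact ⟨a, Or.inr hx⟩
  -- the point directly preceding a non-strand-minimal point lies on the same strand, lower
  have pred : ∀ p : ZMod (2 * n), (∃ q, strand q = strand p ∧ hgt q < hgt p) →
      strand (p - 1) = strand p ∧ hgt (p - 1) < hgt p := by
    rintro p ⟨q, hqs, hqh⟩
    have hq : q.val < p.val := (h4 q p).2 (Or.inr ⟨hqs, hqh⟩)
    have hone : (1 : ZMod (2 * n)).val = 1 := ZMod.val_one _
    have hval : (p - 1).val = p.val - 1 := by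
      rw [ZMod.val_sub (by omega)]; omega
    have h2' : (p - 1).val < p.val := by omega
    have lex1 := (h4 (p - 1) p).1 h2'
    have lex2 : ¬ (sOrd (strand (p - 1)) < sOrd (strand q) ∨
        (strand (p - 1) = strand q ∧ hgt (p - 1) < hgt q)) := by
      intro hl
      have := (h4 (p - 1) q).2 hl
      omega
    rcases lex1 with hs | hs
    · exact absurd (Or.inl (by rwa [hqs])) lex2
    · exact hs
  -- main lemma: if R contains all arrows strictly below p, then p is preceded by a marking
  have main : ∀ h0 : ℕ, ∀ p : ZMod (2 * n), hgt p = h0 → ∀ R : Set (Fin n),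
      (∀ b, hgt (G.head b) < hgt p → b ∈ R) → G.precededBy m R p := by
    intro h0
    induction h0 using Nat.strong_induction_on with
    | _ h0 ih =>
      intro p hp R hR
      by_cases hmin : ∀ q, strand q = strand p → hgt p ≤ hgt q
      · refine ⟨0, by simpa using h5 p hmin, fun i hi => absurd hi (Nat.not_lt_zero i)⟩
      · push_neg at hmin
        obtain ⟨q, hqs, hqh⟩ := hmin
        have hr := pred p ⟨q, hqs, hqh⟩
        obtain ⟨b, hb⟩ := surj (p - 1)
        have hbh : hgt (G.head b) < hgt p := by
          rcases hb with hb | hb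
          · rw [hb]; exact hr.2
          · rw [h1 b, hb]; exact hr.2
        obtain ⟨j, hj1, hj2⟩ := ih (hgt (p - 1)) (hp ▸ hr.2) (p - 1) rfl R
          (fun c hc => hR c (lt_trans hc hr.2))
        refine ⟨j + 1, ?_, ?_⟩
        · have he : p - 1 - ((j + 1 : ℕ) : ZMod (2 * n)) = p - 1 - 1 - (j : ZMod (2 * n)) := by
            push_cast; ring
          rwa [he]
        · intro i hi
          cases i with
          | zero =>
            refine ⟨b, hR b hbh, ?_⟩
            have he : p - 1 - ((0 : ℕ) : ZMod (2 * n)) = p - 1 := by push_cast; ring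
            rw [he]
            exact hb
          | succ i' =>
            obtain ⟨c, hc1, hc2⟩ := hj2 i' (by omega)
            refine ⟨c, hc1, ?_⟩
            have he : p - 1 - ((i' + 1 : ℕ) : ZMod (2 * n)) =
                p - 1 - 1 - ((i' : ℕ) : ZMod (2 * n)) := by push_cast; ring
            rwa [he]
  -- monotonicity of removedAt
  have step : ∀ l, G.removedAt m l ⊆ G.removedAt m (l + 1) := by
    intro l
    show G.removedAt m l ⊆ G.removedAt m l ∪ _
    exact Set.subset_union_left
  have mono : ∀ k₁ l, k₁ ≤ l → G.removedAt m k₁ ⊆ G.removedAt m l := by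
    intro k₁ l h
    induction l with
    | zero => simp_all
    | succ l ihl =>
      rcases Nat.lt_or_ge k₁ (l + 1) with h' | h'
      · exact (ihl (by omega)).trans (step l)
      · have : k₁ = l + 1 := by omega
        subst this; exact subset_rfl
  constructor
  · intro a ha
    refine Or.inr ⟨main _ (G.head a) rfl ∅ (fun b hb => absurd (ha b) (by omega)), ?_⟩
    refine main _ (G.tail a) rfl ∅ (fun b hb => ?_)
    rw [← h1 a] at hb
    exact absurd (ha b) (by omega)
  · have lev : ∀ h0 a, hgt (G.head a) = h0 → G.HasLevel m a := by
      intro h0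
      induction h0 using Nat.strong_induction_on with
      | _ h0 ih =>
        intro a ha
        have hbl : ∀ b, hgt (G.head b) < hgt (G.head a) → G.HasLevel m b :=
          fun b h => ih (hgt (G.head b)) (ha ▸ h) b rfl
        have hK : ∃ K, ∀ b, hgt (G.head b) < hgt (G.head a) → b ∈ G.removedAt m K := by
          have g : ∀ b : Fin n, ∃ kb, hgt (G.head b) < hgt (G.head a) → b ∈ G.removedAt m kb := by
            intro b
            by_cases h : hgt (G.head b) < hgt (G.head a)
            · obtain ⟨kb, hkb⟩ := hbl b h
              exact ⟨kb, fun _ => hkb⟩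
            · exact ⟨0, fun h' => absurd h' h⟩
          choose f hf using g
          refine ⟨Finset.univ.sup f, fun b hb => ?_⟩
          exact mono (f b) _ (Finset.le_sup (Finset.mem_univ b)) (hf b hb)
        obtain ⟨K, hK⟩ := hK
        refine ⟨K + 1, Or.inr ⟨main _ (G.head a) rfl _ hK, ?_⟩⟩
        refine main _ (G.tail a) rfl _ (fun b hb => ?_)
        rw [← h1 a] at hb
        exact hK b hb
    exact fun a => lev _ a rfl
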